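/- Let ℛ be a linear growing TRS over a signature 𝓖 and let T ⊆ 𝒯(𝓖) be a recognizable set of ground terms. Then the set (→_ℛ*)[T] = { s ∈ 𝒯(𝓖) : s →_ℛ* t for some t ∈ T } of ground terms that rewrite in ℛ to a term in T is recognizable. -/

import Mathlib

set_option maxHeartbeats 1000000

/-! ## Terms over a signature -/

/-- Terms over a signature given by a type `F` of function symbols together with
an arity function `ar`; variables are natural numbers. -/
inductive Term (F : Type) (ar : F → ℕ) : Type
  | var : ℕ → Term F ar
  | app : (f : F) → (Fin (ar f) → Term F ar) → Term F ar

namespace Term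

variable {F : Type} {ar : F → ℕ}

/-- The (finite) set of variables of a term. -/
def vars : Term F ar → Finset ℕ
  | var n => {n}
  | app _ ts => Finset.univ.biUnion fun i => (ts i).vars

/-- A term is ground if it contains no variables. -/
def Ground (t : Term F ar) : Prop := t.vars = ∅

/-- The number of occurrences of the variable `n` in a term. -/
def count (n : ℕ) : Term F ar → ℕ
  | var m => if m = n then 1 else 0
  | app _ ts => ∑ i, (ts i).count n

/-- A term is linear if no variable occurs twice in it. -/
def Linear (t : Term F ar) : Prop := ∀ n, t.count n ≤ 1

/-- Applying a substitution to a term. -/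
def subst (σ : ℕ → Term F ar) : Term F ar → Term F ar
  | var n => σ n
  | app f ts => app f fun i => (ts i).subst σ

/-- The subterm at a position (a list of argument indices), if the position is valid. -/
def subtermAt : Term F ar → List ℕ → Option (Term F ar)
  | t, [] => some t
  | var _, _ :: _ => none
  | app f ts, i :: p => if h : i < ar f then (ts ⟨i, h⟩).subtermAt p else none

/-- Replacing the subterm at a position, if the position is valid. -/
def replaceAt : Term F ar → List ℕ → Term F ar → Option (Term F ar)
  | _, [], u => some u
  | var _, _ :: _, _ => none
  | app f ts, i :: p, u =>
      if h : i < ar f then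
        ((ts ⟨i, h⟩).replaceAt p u).map fun s => app f (Function.update ts ⟨i, h⟩ s)
      else none

/-- `s.IsSubtermOf t` : `s` is a subterm of `t`. -/
def IsSubtermOf (s t : Term F ar) : Prop := ∃ p, t.subtermAt p = some s

/-- Relabelling of function symbols along an arity-preserving map of signatures. -/
def relabel {G : Type} {arG : G → ℕ} (φ : F → G) (h : ∀ f, arG (φ f) = ar f) :
    Term F ar → Term G arG
  | var n => var n
  | app f ts => app (φ f) fun i => (ts (Fin.cast (h f) i)).relabel φ h

end Term

/-! ## Rewriting -/

/-- One-step rewriting with a set of rewrite rules: there are a position `p` of `s`,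
a rule `(l, r)` and a substitution `σ` with `s|_p = lσ` and `t = s[rσ]_p`. -/
def Rewrites {F : Type} {ar : F → ℕ} (R : Set (Term F ar × Term F ar))
    (s t : Term F ar) : Prop :=
  ∃ (p : List ℕ) (l r : Term F ar) (σ : ℕ → Term F ar),
    (l, r) ∈ R ∧ s.subtermAt p = some (l.subst σ) ∧ s.replaceAt p (r.subst σ) = some t

/-- Many-step rewriting (reflexive–transitive closure). -/
abbrev RewritesStar {F : Type} {ar : F → ℕ} (R : Set (Term F ar × Term F ar)) :
    Term F ar → Term F ar → Prop :=
  Relation.ReflTransGen (Rewrites R)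

/-- A term rewriting system: a finite set of rules whose left-hand sides are not variables. -/
structure TRS (F : Type) (ar : F → ℕ) where
  rules : Set (Term F ar × Term F ar)
  finite : rules.Finite
  lhs_not_var : ∀ lr ∈ rules, ∀ n, lr.1 ≠ Term.var n

namespace TRS

variable {F : Type} {ar : F → ℕ}

def LeftLinear (R : TRS F ar) : Prop := ∀ lr ∈ R.rules, lr.1.Linear

def RightLinear (R : TRS F ar) : Prop := ∀ lr ∈ R.rules, lr.2.Linear

/-- A TRS is linear if all left- and right-hand sides are linear terms. -/
def IsLinear (R : TRS F ar) : Prop := R.LeftLinear ∧ R.RightLinear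

/-- A TRS is growing if every variable occurring both in the left- and the right-hand
side of a rule occurs at depth 1 in the left-hand side. -/
def Growing (R : TRS F ar) : Prop :=
  ∀ lr ∈ R.rules, ∀ n ∈ lr.1.vars, n ∈ lr.2.vars →
    ∀ (f : F) (ts : Fin (ar f) → Term F ar), lr.1 = Term.app f ts →
      ∀ i, n ∈ (ts i).vars → ts i = Term.var n

/-- A redex is an instance of a left-hand side. -/
def IsRedex (R : TRS F ar) (s : Term F ar) : Prop :=
  ∃ lr ∈ R.rules, ∃ σ : ℕ → Term F ar, s = lr.1.subst σ

/-- `p` is a redex position of `s`. -/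
def RedexPos (R : TRS F ar) (s : Term F ar) (p : List ℕ) : Prop :=
  ∃ u, s.subtermAt p = some u ∧ R.IsRedex u

def Reducible (R : TRS F ar) (s : Term F ar) : Prop := ∃ p, R.RedexPos s p

/-- A term is root-stable if it cannot be rewritten to a redex. -/
def RootStable (R : TRS F ar) (s : Term F ar) : Prop :=
  ¬ ∃ t, RewritesStar R.rules s t ∧ R.IsRedex t

/-- Ground normal forms. -/
def NFset (R : TRS F ar) : Set (Term F ar) := { t | t.Ground ∧ ¬ R.Reducible t }

/-- Ground redexes. -/
def RedexSet (R : TRS F ar) : Set (Term F ar) := { t | t.Ground ∧ R.IsRedex t }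

/-- Root-stable ground terms. -/
def RSset (R : TRS F ar) : Set (Term F ar) := { t | t.Ground ∧ R.RootStable t }

/-- Relabelling a TRS along an arity-preserving map of signatures. -/
def relabel {G : Type} {arG : G → ℕ} (R : TRS F ar) (φ : F → G)
    (h : ∀ f, arG (φ f) = ar f) : TRS G arG where
  rules := (fun lr => (lr.1.relabel φ h, lr.2.relabel φ h)) '' R.rules
  finite := R.finite.image _
  lhs_not_var := by
    rintro lr ⟨lr0, h0, rfl⟩ n hn
    dsimp only at hn
    cases h1 : lr0.1 with
    | var m => exact absurd h1 (R.lhs_not_var lr0 h0 m)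
    | app f ts =>
        rw [h1] at hn
        simp only [Term.relabel] at hn
        simp at hn

end TRS

/-! ## Tree automata -/

/-- A transition rule `f(q₁,…,qₙ) → q` of a bottom-up tree automaton. -/
abbrev TARule (F : Type) (ar : F → ℕ) (Q : Type) : Type :=
  (f : F) × ((Fin (ar f) → Q) × Q)

/-- A (finite bottom-up) tree automaton without ε-transitions. -/
structure TreeAutomaton (F : Type) (ar : F → ℕ) (Q : Type) where
  trans : Set (TARule F ar Q)
  final : Set Q

/-- `Reaches Δ t q` : the ground term `t` rewrites to the state `q` using the
transition rules `Δ`. -/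
inductive Reaches {F : Type} {ar : F → ℕ} {Q : Type} (Δ : Set (TARule F ar Q)) :
    Term F ar → Q → Prop
  | app {f : F} {ts : Fin (ar f) → Term F ar} {qs : Fin (ar f) → Q} {q : Q} :
      (∀ i, Reaches Δ (ts i) (qs i)) → (⟨f, qs, q⟩ : TARule F ar Q) ∈ Δ →
      Reaches Δ (Term.app f ts) q

/-- `ReachesT Δ θ t q` : the term `t`, whose variables are interpreted as the states
given by `θ`, rewrites to the state `q` using the transition rules `Δ`. -/
inductive ReachesT {F : Type} {ar : F → ℕ} {Q : Type} (Δ : Set (TARule F ar Q))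
    (θ : ℕ → Q) : Term F ar → Q → Prop
  | var (n : ℕ) : ReachesT Δ θ (Term.var n) (θ n)
  | app {f : F} {ts : Fin (ar f) → Term F ar} {qs : Fin (ar f) → Q} {q : Q} :
      (∀ i, ReachesT Δ θ (ts i) (qs i)) → (⟨f, qs, q⟩ : TARule F ar Q) ∈ Δ →
      ReachesT Δ θ (Term.app f ts) q

/-- The language of a tree automaton: all ground terms reaching a final state. -/
def Lang {F : Type} {ar : F → ℕ} {Q : Type} (A : TreeAutomaton F ar Q) :
    Set (Term F ar) :=
  { t | t.Ground ∧ ∃ q ∈ A.final, Reaches A.trans t q }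

/-- A set of ground terms is recognizable if it is the language of some finite
tree automaton. -/
def Recognizable {F : Type} {ar : F → ℕ} (T : Set (Term F ar)) : Prop :=
  ∃ (Q : Type) (_ : Fintype Q) (A : TreeAutomaton F ar Q), T = Lang A

/-- The set of states occurring in a set of transition rules. -/
def statesOf {F : Type} {ar : F → ℕ} {Q : Type} (Γ : Set (TARule F ar Q)) : Set Q :=
  { q | ∃ ρ ∈ Γ, ρ.2.2 = q ∨ ∃ i, ρ.2.1 i = q }

/-! ## The automaton `ℬ(ℛ)` -/

/-- The canonical representative of the state `⟨t⟩` of `ℬ(ℛ)`: all variables are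
identified with the single state `⟨x⟩`, represented by `var 0`. -/
def stPattern {F : Type} {ar : F → ℕ} : Term F ar → Term F ar
  | Term.var _ => Term.var 0
  | Term.app f ts => Term.app f ts

/-- `S_ℛ`: the set of all subterms of arguments of left-hand sides of `ℛ`. -/
def SR {F : Type} {ar : F → ℕ} (R : TRS F ar) : Set (Term F ar) :=
  { s | ∃ lr ∈ R.rules, ∃ (f : F) (ts : Fin (ar f) → Term F ar),
        lr.1 = Term.app f ts ∧ ∃ i, s.IsSubtermOf (ts i) }

/-- The representatives of the states of `ℬ(ℛ)`: the patterns of terms of `S_ℛ`,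
together with `⟨x⟩`. -/
def BStateSet {F : Type} {ar : F → ℕ} (R : TRS F ar) : Set (Term F ar) :=
  stPattern '' SR R ∪ {Term.var 0}

/-- The matching rules of `ℬ(ℛ)` (with states encoded by `enc`):
`f(⟨t₁⟩,…,⟨tₙ⟩) → ⟨t⟩` for every `t = f(t₁,…,tₙ) ∈ S_ℛ`. -/
def BMatch {F : Type} {ar : F → ℕ} {Q : Type} (R : TRS F ar) (enc : Term F ar → Q) :
    Set (TARule F ar Q) :=
  { ρ | ∃ (f : F) (ts : Fin (ar f) → Term F ar), Term.app f ts ∈ SR R ∧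
        ρ = ⟨f, fun i => enc (stPattern (ts i)), enc (Term.app f ts)⟩ }

/-- The propagation rules `f(⟨x⟩,…,⟨x⟩) → ⟨x⟩` for every function symbol `f`. -/
def BProp {F : Type} {ar : F → ℕ} {Q : Type} (enc : Term F ar → Q) :
    Set (TARule F ar Q) :=
  { ρ | ∃ f : F, ρ = ⟨f, fun _ => enc (Term.var 0), enc (Term.var 0)⟩ }

/-- The transition rules of the automaton `ℬ(ℛ)`. -/
def BTrans {F : Type} {ar : F → ℕ} {Q : Type} (R : TRS F ar) (enc : Term F ar → Q) :
    Set (TARule F ar Q) :=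
  BMatch R enc ∪ BProp enc

/-- `Σ(t)`: the set of ground instances of the term `t`. -/
def GInst {F : Type} {ar : F → ℕ} (t : Term F ar) : Set (Term F ar) :=
  { s | s.Ground ∧ ∃ σ, s = t.subst σ }

/-! ## Saturation -/

/-- The state `qᵢ` associated to the argument `lᵢ` of a left-hand side in the
saturation rule: `lᵢθ` if `lᵢ` is a variable occurring in `r` (whose variable set
is `rv`), and `⟨lᵢ⟩` otherwise. -/
def satArg {F : Type} {ar : F → ℕ} {Q : Type} (enc : Term F ar → Q) (θ : ℕ → Q)
    (rv : Finset ℕ) : Term F ar → Q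
  | Term.var n => if n ∈ rv then θ n else enc (Term.var 0)
  | Term.app f ts => enc (Term.app f ts)

/-- One step of the saturation process: add all transition rules `f(q₁,…,qₙ) → q`
obtained from a rewrite rule `f(l₁,…,lₙ) → r` and a state substitution `θ`
(with values among the states `Qc` of the automaton) such that `rθ →_Γ* q`. -/
def satStep {F : Type} {ar : F → ℕ} {Q : Type} (R : TRS F ar) (enc : Term F ar → Q)
    (Qc : Set Q) (Γ : Set (TARule F ar Q)) : Set (TARule F ar Q) :=
  Γ ∪ { ρ | ∃ (f : F) (ls : Fin (ar f) → Term F ar) (r : Term F ar) (θ : ℕ → Q) (q : Q),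
        (Term.app f ls, r) ∈ R.rules ∧ (∀ n ∈ r.vars, θ n ∈ Qc) ∧ ReachesT Γ θ r q ∧
        ρ = ⟨f, fun i => satArg enc θ r.vars (ls i), q⟩ }

/-- The saturated set of transition rules: the closure of `Γ0` under the saturation
inference rule. -/
def satGamma {F : Type} {ar : F → ℕ} {Q : Type} (R : TRS F ar) (enc : Term F ar → Q)
    (Qc : Set Q) (Γ0 : Set (TARule F ar Q)) : Set (TARule F ar Q) :=
  ⋃ n, (satStep R enc Qc)^[n] Γ0

/-! ## The automaton `𝒞_T(ℛ)` and its extension `𝒞'_T(ℛ)` -/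

/-- The data of the construction of the automaton `𝒞_T(ℛ)`: an automaton `𝒜_T`
recognizing `T` with all states accessible and state set `QA`, together with an
encoding `enc` of the states `⟨t⟩` of `ℬ(ℛ)` into the common state type `Q`, such
that every state common to `𝒜_T` and `ℬ(ℛ)` accepts the same set of terms in both
automata. -/
structure CSetup {G : Type} [Fintype G] {arG : G → ℕ} (Q : Type) [Fintype Q]
    (Rg : TRS G arG) (T : Set (Term G arG)) where
  enc : Term G arG → Q
  A : TreeAutomaton G arG Q
  QA : Set Q
  henc : Set.InjOn enc (BStateSet Rg)
  hAstates : ∀ ρ ∈ A.trans, ρ.2.2 ∈ QA ∧ ∀ i, ρ.2.1 i ∈ QA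
  hfinal : A.final ⊆ QA
  hacc : ∀ q ∈ QA, ∃ s : Term G arG, s.Ground ∧ Reaches A.trans s q
  hground : ∃ s : Term G arG, s.Ground
  hshared : ∀ q ∈ QA ∩ enc '' BStateSet Rg, ∀ s : Term G arG,
      Reaches A.trans s q ↔ Reaches (BTrans Rg enc) s q
  hT : T = Lang A

namespace CSetup

variable {G : Type} [Fintype G] {arG : G → ℕ} {Q : Type} [Fintype Q]
  {Rg : TRS G arG} {T : Set (Term G arG)}

/-- The set of states of the automaton `𝒞_T(ℛ)`. -/
def Qstates (C : CSetup Q Rg T) : Set Q := C.QA ∪ C.enc '' BStateSet Rg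

/-- The transition rules of `𝒞_T(ℛ)` before saturation: the union of `𝒜_T` and `ℬ(ℛ)`. -/
def Γ0 (C : CSetup Q Rg T) : Set (TARule G arG Q) := C.A.trans ∪ BTrans Rg C.enc

/-- The transition rules of `𝒞_T(ℛ)` after saturation. -/
def Γsat (C : CSetup Q Rg T) : Set (TARule G arG Q) :=
  satGamma Rg C.enc C.Qstates C.Γ0

end CSetup

/-- The redex rules `f(⟪l₁⟫,…,⟪lₙ⟫) → q_r` for every left-hand side `f(l₁,…,lₙ)`. -/
def RedexRules {F : Type} {ar : F → ℕ} {Q : Type} (R : TRS F ar)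
    (enc2 : Term F ar → Q) (qr : Q) : Set (TARule F ar Q) :=
  { ρ | ∃ (f : F) (ls : Fin (ar f) → Term F ar) (r : Term F ar),
        (Term.app f ls, r) ∈ R.rules ∧
        ρ = ⟨f, fun i => enc2 (stPattern (ls i)), qr⟩ }

/-- The rules `f(⟨x⟩,…,q_r,…,⟨x⟩) → q_r`. -/
def QrProp {F : Type} {ar : F → ℕ} {Q : Type} (enc : Term F ar → Q) (qr : Q) :
    Set (TARule F ar Q) :=
  { ρ | ∃ (f : F) (j : Fin (ar f)),
        ρ = ⟨f, fun i => if i = j then qr else enc (Term.var 0), qr⟩ }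

/-- The data of the construction of the automaton `𝒞'_T(ℛ)`: `𝒞_T(ℛ)` extended with
a fresh copy `⟪t⟫` (encoded by `enc2`, with `⟪x⟫ = ⟨x⟩`) of the states of `ℬ(ℛ)` and
a fresh state `q_r`. -/
structure CpSetup {G : Type} [Fintype G] {arG : G → ℕ} (Q : Type) [Fintype Q]
    (Rg : TRS G arG) (T : Set (Term G arG)) extends CSetup Q Rg T where
  enc2 : Term G arG → Q
  qr : Q
  henc2 : Set.InjOn enc2 (BStateSet Rg)
  hx : enc2 (Term.var 0) = enc (Term.var 0)
  hfresh : (enc2 '' (BStateSet Rg \ {Term.var 0}) ∪ {qr}) ∩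
              (QA ∪ enc '' BStateSet Rg) = ∅
  hqr : qr ∉ enc2 '' (BStateSet Rg \ {Term.var 0})

namespace CpSetup

variable {G : Type} [Fintype G] {arG : G → ℕ} {Q : Type} [Fintype Q]
  {Rg : TRS G arG} {T : Set (Term G arG)}

/-- The transition rules `Γ'` of the automaton `𝒞'_T(ℛ)`. -/
def Γ' (C : CpSetup Q Rg T) : Set (TARule G arG Q) :=
  C.toCSetup.Γsat ∪ BMatch Rg C.enc2 ∪ RedexRules Rg C.enc2 C.qr ∪ QrProp C.enc C.qr

end CpSetup

/-! ## The signature `𝓖 = 𝓕 ∪ {•}` -/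

/-- The arity function of the extended signature `𝓕 ∪ {•}` (with `•` the fresh
constant `none`). -/
def arB {F : Type} (ar : F → ℕ) : Option F → ℕ
  | none => 0
  | some f => ar f

/-- The term `•`. -/
def bulletTm {F : Type} {ar : F → ℕ} : Term (Option F) (arB ar) :=
  Term.app none Fin.elim0

/-- The embedding of `𝒯(𝓕)`-terms into terms over `𝓕 ∪ {•}`. -/
def liftB {F : Type} {ar : F → ℕ} : Term F ar → Term (Option F) (arB ar) :=
  Term.relabel some (fun _ => rfl)

/-- A TRS over `𝓕` viewed as a TRS over `𝓕 ∪ {•}`. -/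
def TRS.liftB {F : Type} {ar : F → ℕ} (R : TRS F ar) : TRS (Option F) (arB ar) :=
  R.relabel some (fun _ => rfl)

/-- The TRS `ℛ• = ℛ ∪ {• → •}` over the signature `𝓕 ∪ {•}`. -/
def TRS.bullet {F : Type} {ar : F → ℕ} (R : TRS F ar) : TRS (Option F) (arB ar) where
  rules := R.liftB.rules ∪ {(bulletTm, bulletTm)}
  finite := R.liftB.finite.union (Set.finite_singleton _)
  lhs_not_var := by
    rintro lr (h | h) n hn
    · exact R.liftB.lhs_not_var lr h n hn
    · rw [Set.mem_singleton_iff] at h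
      rw [h] at hn
      simp [bulletTm] at hn

/-! ## The automaton `𝒟(ℛ)` -/

/-- For a symbol `g` and sets of states `Ss` for the arguments, the set
`g(S₁,…,Sₙ)↓` of states reachable from `g` applied to states chosen from the `Ssᵢ`. -/
def oneStep {G : Type} {arG : G → ℕ} {Q : Type} (Γ : Set (TARule G arG Q)) (g : G)
    (Ss : Fin (arG g) → Set Q) : Set Q :=
  { q | ∃ qs : Fin (arG g) → Q, (∀ i, qs i ∈ Ss i) ∧ (⟨g, qs, q⟩ : TARule G arG Q) ∈ Γ }

/-- `t↓` for a ground term `t`: the set of states reachable from `t`. -/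
def dn {G : Type} {arG : G → ℕ} {Q : Type} (Γ : Set (TARule G arG Q))
    (t : Term G arG) : Set Q :=
  { q | Reaches Γ t q }

/-- There is a rewrite rule with left-hand side `g(l₁,…,lₙ)` such that
`⟪lᵢ⟫ ∈ Ssᵢ` for all `i`. -/
def LhsMatch {G : Type} {arG : G → ℕ} {Q : Type} (Rg : TRS G arG)
    (enc2 : Term G arG → Q) (g : G) (Ss : Fin (arG g) → Set Q) : Prop :=
  ∃ (ls : Fin (arG g) → Term G arG) (r : Term G arG),
    (Term.app g ls, r) ∈ Rg.rules ∧ ∀ i, enc2 (stPattern (ls i)) ∈ Ss i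

/-- The transition rules of the automaton `𝒟(ℛ)` over `𝓕`, built from the transition
rules `Γ'` of `𝒞'_{NF}(ℛ)` over `𝓕 ∪ {•}`. -/
def DTrans {F : Type} {ar : F → ℕ} {Q : Type} (Rb : TRS (Option F) (arB ar))
    (Γ' : Set (TARule (Option F) (arB ar) Q))
    (enc enc2 : Term (Option F) (arB ar) → Q) :
    Set (TARule F ar (Set Q × Set Q)) :=
  { ρ | ∃ (f : F) (SP : Fin (ar f) → Set Q × Set Q) (P1 P2 : Set Q),
      P1 ⊆ (⋃ i : Fin (ar f), oneStep Γ' (some f)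
              (fun (j : Fin (ar f)) => if j = i then (SP j).2 else (SP j).1)) ∧
      (∀ (i : Fin (ar f)), ∀ q ∈ (SP i).2,
        (P1 ∩ oneStep Γ' (some f) (fun (j : Fin (ar f)) => if j = i then {q} else (SP j).1)).Nonempty) ∧
      ((LhsMatch Rb enc2 (some f) (fun i => (SP i).1) ∧ P2 = {enc (Term.var 0)}) ∨
       (¬ LhsMatch Rb enc2 (some f) (fun i => (SP i).1) ∧ P2 = (∅ : Set Q))) ∧
      ρ = ⟨f, SP, (oneStep Γ' (some f) (fun i => (SP i).1), P1 ∪ P2)⟩ }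

/-- The automaton `𝒟(ℛ)`: final states are the pairs `[S,P]` with `q_r ∈ S` and
`P ⊆ Q_f`. -/
def DAutomaton {F : Type} {ar : F → ℕ} {Q : Type} (Rb : TRS (Option F) (arB ar))
    (Γ' : Set (TARule (Option F) (arB ar) Q))
    (enc enc2 : Term (Option F) (arB ar) → Q) (qr : Q) (Qf : Set Q) :
    TreeAutomaton F ar (Set Q × Set Q) where
  trans := DTrans Rb Γ' enc enc2
  final := { SP | qr ∈ SP.1 ∧ SP.2 ⊆ Qf }

/-! ## Growing approximations -/

/-- `VarRepl t t'` : `t'` is obtained from `t` by replacing occurrences of variables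
by (possibly other) variables. -/
inductive VarRepl {F : Type} {ar : F → ℕ} : Term F ar → Term F ar → Prop
  | var (n m : ℕ) : VarRepl (Term.var n) (Term.var m)
  | app (f : F) (ts ts' : Fin (ar f) → Term F ar) :
      (∀ i, VarRepl (ts i) (ts' i)) → VarRepl (Term.app f ts) (Term.app f ts')

/-- `Rg` is a growing approximation of `R`: a right-linear growing TRS obtained from
`R` by replacing, in each right-hand side, occurrences of variables by variables not
occurring in the corresponding left-hand side. -/
def IsGrowingApprox {F : Type} {ar : F → ℕ} (R Rg : TRS F ar) : Prop :=
  Rg.RightLinear ∧ Rg.Growing ∧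
  (∀ lr ∈ Rg.rules, ∃ lr' ∈ R.rules, lr.1 = lr'.1 ∧ VarRepl lr'.2 lr.2 ∧
      ∀ n ∈ lr.2.vars, n ∉ lr.1.vars) ∧
  (∀ lr ∈ R.rules, ∃ lr' ∈ Rg.rules, lr.1 = lr'.1 ∧ VarRepl lr.2 lr'.2 ∧
      ∀ n ∈ lr'.2.vars, n ∉ lr'.1.vars)

/-! ## The signature `𝓖 = 𝓕 ∪ {f° : f ∈ 𝓕}` -/

/-- The arity function of the signature `𝓕 ∪ {f° : f ∈ 𝓕}` (`inl f` is `f`,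
`inr f` is `f°`). -/
def arC {F : Type} (ar : F → ℕ) : F ⊕ F → ℕ
  | Sum.inl f => ar f
  | Sum.inr f => ar f

/-- The embedding of `𝒯(𝓕)`-terms into terms over `𝓕 ∪ {f° : f ∈ 𝓕}`. -/
def liftC {F : Type} {ar : F → ℕ} : Term F ar → Term (F ⊕ F) (arC ar) :=
  Term.relabel Sum.inl (fun _ => rfl)

/-- `t°`: mark the root symbol of `t`. -/
def circTm {F : Type} {ar : F → ℕ} : Term F ar → Term (F ⊕ F) (arC ar)
  | Term.var n => Term.var n
  | Term.app f ts => Term.app (Sum.inr f) fun i => liftC (ts i)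

/-- A TRS over `𝓕` viewed as a TRS over `𝓕 ∪ {f° : f ∈ 𝓕}`. -/
def TRS.liftC {F : Type} {ar : F → ℕ} (R : TRS F ar) : TRS (F ⊕ F) (arC ar) :=
  R.relabel Sum.inl (fun _ => rfl)

/-- The TRS `𝒮° = 𝒮 ∪ {l° → r | l → r ∈ 𝒮}` over the signature `𝓕 ∪ {f° : f ∈ 𝓕}`. -/
def TRS.circ {F : Type} {ar : F → ℕ} (S : TRS F ar) : TRS (F ⊕ F) (arC ar) where
  rules := S.liftC.rules ∪ (fun lr => (circTm lr.1, _root_.liftC lr.2)) '' S.rules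
  finite := S.liftC.finite.union (S.finite.image _)
  lhs_not_var := by
    rintro lr (h | ⟨lr0, h0, rfl⟩) n hn
    · exact S.liftC.lhs_not_var lr h n hn
    · dsimp only at hn
      cases h1 : lr0.1 with
      | var m => exact absurd h1 (S.lhs_not_var lr0 h0 m)
      | app f ts =>
          rw [h1] at hn
          simp only [circTm] at hn
          simp at hn

/-- The transitions added to `ℬ(𝒮°)` to obtain `𝒜_{REDEX_{𝒮°}}`:
`f(⟨l₁⟩,…,⟨lₙ⟩) → q_f` and `f°(⟨l₁⟩,…,⟨lₙ⟩) → q_f` for each left-hand side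
`f(l₁,…,lₙ)` of a rule of `𝒮`. -/
def CircRedexRules {F : Type} {ar : F → ℕ} {Q : Type} (S : TRS F ar)
    (enc : Term (F ⊕ F) (arC ar) → Q) (qf : Q) : Set (TARule (F ⊕ F) (arC ar) Q) :=
  { ρ | ∃ (f : F) (ls : Fin (ar f) → Term F ar) (r : Term F ar),
      (Term.app f ls, r) ∈ S.rules ∧
      (ρ = ⟨Sum.inl f, fun i => enc (stPattern (liftC (ls i))), qf⟩ ∨
       ρ = ⟨Sum.inr f, fun i => enc (stPattern (liftC (ls i))), qf⟩) }

/-! ## The automaton `𝒟'(ℛ,𝒮)` -/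

/-- The data of the construction of `𝒞'_{RS_{𝒮°}}(ℛ)`: the saturated automaton
`𝒞_{RS_{𝒮°}}(ℛ)`, a fresh copy `⟪t⟫` (encoded by `enc2`, with `⟪x⟫ = ⟨x⟩`) of the
states of `ℬ(ℛ)`, and an automaton `𝒞_{REDEX_𝒮}(𝒮)` (transitions `Etrans`, final
states `Qf'`) recognizing the non-`𝒮`-root-stable ground terms of `𝒯(𝓕)`. -/
structure CrsSetup {F : Type} [Fintype F] {ar : F → ℕ} (Q : Type) [Fintype Q]
    (R S : TRS F ar) extends CSetup Q R.liftC (TRS.RSset S.circ) where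
  enc2 : Term (F ⊕ F) (arC ar) → Q
  henc2 : Set.InjOn enc2 (BStateSet R.liftC)
  hx : enc2 (Term.var 0) = enc (Term.var 0)
  hfresh2 : (enc2 '' (BStateSet R.liftC \ {Term.var 0})) ∩
              (QA ∪ enc '' BStateSet R.liftC) = ∅
  Etrans : Set (TARule (F ⊕ F) (arC ar) Q)
  Qf' : Set Q
  hQf' : Qf' ⊆ statesOf Etrans
  hEfresh : statesOf Etrans ∩
      (QA ∪ enc '' BStateSet R.liftC ∪ enc2 '' (BStateSet R.liftC \ {Term.var 0})) = ∅
  hE : ∀ t : Term (F ⊕ F) (arC ar),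
      (t.Ground ∧ ∃ q ∈ Qf', Reaches Etrans t q) ↔
      (∃ s : Term F ar, t = liftC s ∧ s.Ground ∧ ¬ S.RootStable s)

namespace CrsSetup

variable {F : Type} [Fintype F] {ar : F → ℕ} {Q : Type} [Fintype Q] {R S : TRS F ar}

/-- The transition rules `Γ'` of the automaton `𝒞'_{RS_{𝒮°}}(ℛ)`. -/
def Γ' (C : CrsSetup Q R S) : Set (TARule (F ⊕ F) (arC ar) Q) :=
  C.toCSetup.Γsat ∪ BMatch R.liftC C.enc2 ∪ C.Etrans

end CrsSetup

/-- The transition rules of the automaton `𝒟'(ℛ,𝒮)` over `𝓕`, built from the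
transition rules `Γ'` of `𝒞'_{RS_{𝒮°}}(ℛ)`. -/
def DTransRS {F : Type} {ar : F → ℕ} {Q : Type} (Rg : TRS (F ⊕ F) (arC ar))
    (Γ' : Set (TARule (F ⊕ F) (arC ar) Q)) (enc2 : Term (F ⊕ F) (arC ar) → Q) :
    Set (TARule F ar (Set Q × Set Q)) :=
  { ρ | ∃ (f : F) (SP : Fin (ar f) → Set Q × Set Q) (P1 P2 : Set Q),
      P1 ⊆ (⋃ i : Fin (ar f), oneStep Γ' (Sum.inl f)
              (fun (j : Fin (ar f)) => if j = i then (SP j).2 else (SP j).1)) ∧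
      (∀ (i : Fin (ar f)), ∀ q ∈ (SP i).2,
        (P1 ∩ oneStep Γ' (Sum.inl f) (fun (j : Fin (ar f)) => if j = i then {q} else (SP j).1)).Nonempty) ∧
      ((LhsMatch Rg enc2 (Sum.inl f) (fun i => (SP i).1) ∧ P2.Nonempty ∧
          P2 ⊆ oneStep Γ' (Sum.inr f) (fun i => (SP i).1)) ∨
       (¬ LhsMatch Rg enc2 (Sum.inl f) (fun i => (SP i).1) ∧ P2 = (∅ : Set Q))) ∧
      ρ = ⟨f, SP, (oneStep Γ' (Sum.inl f) (fun i => (SP i).1), P1 ∪ P2)⟩ }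

/-- The automaton `𝒟'(ℛ,𝒮)`: final states are the pairs `[S,P]` with
`S ∩ Q_f' ≠ ∅` and `P ⊆ Q_f`. -/
def DAutomatonRS {F : Type} {ar : F → ℕ} {Q : Type} (Rg : TRS (F ⊕ F) (arC ar))
    (Γ' : Set (TARule (F ⊕ F) (arC ar) Q)) (enc2 : Term (F ⊕ F) (arC ar) → Q)
    (Qf' Qf : Set Q) : TreeAutomaton F ar (Set Q × Set Q) where
  trans := DTransRS Rg Γ' enc2
  final := { SP | (SP.1 ∩ Qf').Nonempty ∧ SP.2 ⊆ Qf }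

/-! ### Auxiliary development for statement0 -/

namespace Stmt0Aux

open Term

variable {G : Type} {arG : G → ℕ}

theorem mem_vars_app {f : G} {ts : Fin (arG f) → Term G arG} {n : ℕ} :
    n ∈ (Term.app f ts).vars ↔ ∃ i, n ∈ (ts i).vars := by
  simp [Term.vars]

theorem ground_app {f : G} {ts : Fin (arG f) → Term G arG} :
    (Term.app f ts).Ground ↔ ∀ i, (ts i).Ground := by
  simp only [Term.Ground, Term.vars, Finset.eq_empty_iff_forall_notMem,
    Finset.mem_biUnion, Finset.mem_univ, true_and]
  constructor
  · intro h i n hn; exact h n ⟨i, hn⟩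
  · rintro h n ⟨i, hn⟩; exact h i n hn

theorem not_ground_var (n : ℕ) : ¬ (Term.var n : Term G arG).Ground := by
  simp [Term.Ground, Term.vars]

theorem mem_vars_iff_count_pos {t : Term G arG} {n : ℕ} :
    n ∈ t.vars ↔ 0 < t.count n := by
  induction t with
  | var m =>
      simp only [Term.vars, Term.count, Finset.mem_singleton]
      constructor
      · intro h; subst h; simp
      · intro h
        by_contra hne
        rw [if_neg (fun hh => hne hh.symm)] at h
        omega
  | app f ts ih =>
      simp only [Term.count, mem_vars_app]
      rw [Nat.pos_iff_ne_zero, Ne, Finset.sum_eq_zero_iff]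
      push_neg
      simp only [ih, Nat.pos_iff_ne_zero]
      constructor
      · rintro ⟨i, hi⟩; exact ⟨i, Finset.mem_univ i, hi⟩
      · rintro ⟨i, _, hi⟩; exact ⟨i, hi⟩

theorem linear_app_child {f : G} {ts : Fin (arG f) → Term G arG}
    (h : (Term.app f ts).Linear) (i : Fin (arG f)) : (ts i).Linear := by
  intro n
  refine le_trans ?_ (h n)
  exact Finset.single_le_sum (f := fun j => (ts j).count n)
    (fun _ _ => Nat.zero_le _) (Finset.mem_univ i)

theorem linear_app_unique {f : G} {ts : Fin (arG f) → Term G arG}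
    (h : (Term.app f ts).Linear) {n : ℕ} {i j : Fin (arG f)}
    (hi : n ∈ (ts i).vars) (hj : n ∈ (ts j).vars) : i = j := by
  by_contra hne
  have h1 : 1 ≤ (ts i).count n := mem_vars_iff_count_pos.mp hi
  have h2 : 1 ≤ (ts j).count n := mem_vars_iff_count_pos.mp hj
  have hsum : (ts i).count n + (ts j).count n ≤ (Term.app f ts).count n := by
    show _ ≤ ∑ k, (ts k).count n
    rw [← Finset.add_sum_erase _ _ (Finset.mem_univ i)]
    refine Nat.add_le_add_left ?_ _
    exact Finset.single_le_sum (f := fun k => (ts k).count n) (fun _ _ => Nat.zero_le _)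
      (Finset.mem_erase.mpr ⟨Ne.symm hne, Finset.mem_univ j⟩)
  have := h n
  omega

theorem subst_congr {t : Term G arG} {σ σ' : ℕ → Term G arG}
    (h : ∀ n ∈ t.vars, σ n = σ' n) : t.subst σ = t.subst σ' := by
  induction t with
  | var n => exact h n (by simp [Term.vars])
  | app f ts ih =>
      show Term.app f _ = Term.app f _
      congr 1
      funext i
      exact ih i (fun n hn => h n (mem_vars_app.mpr ⟨i, hn⟩))

theorem ground_subst_of {t : Term G arG} {σ : ℕ → Term G arG}
    (h : ∀ n ∈ t.vars, (σ n).Ground) : (t.subst σ).Ground := by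
  induction t with
  | var n => exact h n (by simp [Term.vars])
  | app f ts ih =>
      show (Term.app f _).Ground
      exact ground_app.mpr fun i => ih i (fun n hn => h n (mem_vars_app.mpr ⟨i, hn⟩))

theorem ground_of_ground_subst {t : Term G arG} {σ : ℕ → Term G arG}
    (h : (t.subst σ).Ground) : ∀ n ∈ t.vars, (σ n).Ground := by
  induction t with
  | var n =>
      intro m hm
      simp only [Term.vars, Finset.mem_singleton] at hm
      subst hm; exact h
  | app f ts ih =>
      intro n hn
      obtain ⟨i, hi⟩ := mem_vars_app.mp hn
      have : ((ts i).subst σ).Ground := ground_app.mp h i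
      exact ih i this n hi

theorem subst_ground {t : Term G arG} (h : t.Ground) (σ : ℕ → Term G arG) :
    t.subst σ = t := by
  induction t with
  | var n => exact absurd h (not_ground_var n)
  | app f ts ih =>
      show Term.app f _ = Term.app f _
      congr 1
      funext i
      exact ih i (ground_app.mp h i)

theorem subst_subst (t : Term G arG) (σ τ : ℕ → Term G arG) :
    (t.subst σ).subst τ = t.subst (fun n => (σ n).subst τ) := by
  induction t with
  | var n => rfl
  | app f ts ih =>
      show Term.app f _ = Term.app f _
      congr 1
      funext i
      exact ih i

/-! #### Positions and subterms -/

theorem subtermAt_append (t : Term G arG) (p p' : List ℕ) :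
    t.subtermAt (p ++ p') = (t.subtermAt p).bind (fun u => u.subtermAt p') := by
  induction p generalizing t with
  | nil => cases t <;> rfl
  | cons i p ih =>
      cases t with
      | var n => rfl
      | app f ts =>
          show Term.subtermAt (Term.app f ts) (i :: (p ++ p')) = _
          simp only [Term.subtermAt]
          split
          · exact ih _
          · rfl

theorem vars_subtermAt {t u : Term G arG} {p : List ℕ}
    (h : t.subtermAt p = some u) : u.vars ⊆ t.vars := by
  induction p generalizing t with
  | nil =>
      simp only [Term.subtermAt, Option.some.injEq] at h
      subst h; exact Finset.Subset.refl _
  | cons i p ih =>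
      cases t with
      | var n => exact absurd h (by simp [Term.subtermAt])
      | app f ts =>
          simp only [Term.subtermAt] at h
          split at h
          · next hlt =>
              refine Finset.Subset.trans (ih h) ?_
              intro n hn
              exact mem_vars_app.mpr ⟨⟨i, hlt⟩, hn⟩
          · exact absurd h (by simp)

theorem ground_subtermAt {t u : Term G arG} {p : List ℕ}
    (h : t.subtermAt p = some u) (hg : t.Ground) : u.Ground := by
  have := vars_subtermAt h
  rw [Term.Ground] at hg ⊢
  rw [hg] at this
  exact Finset.subset_empty.mp this

theorem count_subtermAt {t u : Term G arG} {p : List ℕ} {n : ℕ}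
    (h : t.subtermAt p = some u) : u.count n ≤ t.count n := by
  induction p generalizing t with
  | nil =>
      simp only [Term.subtermAt, Option.some.injEq] at h
      subst h; exact le_refl _
  | cons i p ih =>
      cases t with
      | var m => exact absurd h (by simp [Term.subtermAt])
      | app f ts =>
          simp only [Term.subtermAt] at h
          split at h
          · next hlt =>
              refine (ih h).trans ?_
              exact Finset.single_le_sum (f := fun k => (ts k).count n)
                (fun _ _ => Nat.zero_le _) (Finset.mem_univ (⟨i, hlt⟩ : Fin (arG f)))
          · exact absurd h (by simp)

theorem linear_subtermAt {t u : Term G arG} {p : List ℕ}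
    (h : t.subtermAt p = some u) (hl : t.Linear) : u.Linear :=
  fun n => le_trans (count_subtermAt h) (hl n)

theorem isSubtermOf_trans {s u t : Term G arG}
    (h1 : s.IsSubtermOf u) (h2 : u.IsSubtermOf t) : s.IsSubtermOf t := by
  obtain ⟨p1, hp1⟩ := h1
  obtain ⟨p2, hp2⟩ := h2
  exact ⟨p2 ++ p1, by rw [subtermAt_append, hp2]; exact hp1⟩

theorem arg_isSubtermOf {f : G} {ts : Fin (arG f) → Term G arG} (i : Fin (arG f)) :
    (ts i).IsSubtermOf (Term.app f ts) := by
  refine ⟨[i.1], ?_⟩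
  simp only [Term.subtermAt, i.isLt, dif_pos, Fin.eta]

theorem isSubtermOf_refl (t : Term G arG) : t.IsSubtermOf t := ⟨[], by cases t <;> rfl⟩

theorem finite_subterms (t : Term G arG) : {s : Term G arG | s.IsSubtermOf t}.Finite := by
  induction t with
  | var n =>
      refine Set.Finite.subset (Set.finite_singleton (Term.var n)) ?_
      rintro s ⟨p, hp⟩
      cases p with
      | nil => simp only [Term.subtermAt, Option.some.injEq] at hp; simp [hp]
      | cons i p => exact absurd hp (by simp [Term.subtermAt])
  | app f ts ih =>
      refine Set.Finite.subset (Set.Finite.insert (Term.app f ts)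
        (Set.finite_iUnion ih)) ?_
      rintro s ⟨p, hp⟩
      cases p with
      | nil =>
          simp only [Term.subtermAt, Option.some.injEq] at hp
          exact Or.inl hp.symm
      | cons i p =>
          simp only [Term.subtermAt] at hp
          split at hp
          · next hlt => exact Or.inr (Set.mem_iUnion.mpr ⟨⟨i, hlt⟩, ⟨p, hp⟩⟩)
          · exact absurd hp (by simp)

theorem replaceAt_self {t u : Term G arG} {p : List ℕ}
    (h : t.subtermAt p = some u) : t.replaceAt p u = some t := by
  induction p generalizing t with
  | nil =>
      simp only [Term.subtermAt, Option.some.injEq] at h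
      subst h; cases t <;> rfl
  | cons i p ih =>
      cases t with
      | var n => exact absurd h (by simp [Term.subtermAt])
      | app f ts =>
          simp only [Term.subtermAt] at h
          split at h
          · next hlt =>
              simp only [Term.replaceAt, dif_pos hlt, ih h, Option.map_some,
                Option.some.injEq, Function.update_eq_self]
          · exact absurd h (by simp)

theorem subst_subtermAt {t u : Term G arG} {p : List ℕ}
    (h : t.subtermAt p = some u) (σ : ℕ → Term G arG) :
    (t.subst σ).subtermAt p = some (u.subst σ) := by
  induction p generalizing t with
  | nil =>
      simp only [Term.subtermAt, Option.some.injEq] at h ⊢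
      rw [h]
  | cons i p ih =>
      cases t with
      | var n => exact absurd h (by simp [Term.subtermAt])
      | app f ts =>
          simp only [Term.subtermAt] at h
          split at h
          · next hlt =>
              show Term.subtermAt (Term.app f fun j => (ts j).subst σ) (i :: p) = _
              simp only [Term.subtermAt, dif_pos hlt]
              exact ih h
          · exact absurd h (by simp)

theorem update_subst {f : G} (ts : Fin (arG f) → Term G arG) (i : Fin (arG f))
    (c : Term G arG) (σ : ℕ → Term G arG) :
    (fun j => (Function.update ts i c j).subst σ)
      = Function.update (fun j => (ts j).subst σ) i (c.subst σ) := by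
  funext j
  rcases eq_or_ne j i with rfl | hne
  · simp
  · simp [Function.update_of_ne hne]

theorem subst_replaceAt {t w v : Term G arG} {p : List ℕ}
    (h : t.replaceAt p w = some v) (σ : ℕ → Term G arG) :
    (t.subst σ).replaceAt p (w.subst σ) = some (v.subst σ) := by
  induction p generalizing t v with
  | nil =>
      simp only [Term.replaceAt, Option.some.injEq] at h ⊢
      rw [h]
  | cons i p ih =>
      cases t with
      | var n => exact absurd h (by simp [Term.replaceAt])
      | app f ts =>
          simp only [Term.replaceAt] at h
          split at h
          · next hlt =>
              rw [Option.map_eq_some_iff] at h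
              obtain ⟨c, hc, hv⟩ := h
              subst hv
              show Term.replaceAt (Term.app f fun j => (ts j).subst σ) (i :: p) _ = _
              simp only [Term.replaceAt, dif_pos hlt, ih hc, Option.map_some,
                Option.some.injEq]
              show Term.app f _ = Term.app f _
              congr 1
              exact (update_subst ts ⟨i, hlt⟩ c σ).symm
          · exact absurd h (by simp)

/-! #### Rewriting lemmas -/

theorem rewrites_subst {R : Set (Term G arG × Term G arG)} {u v : Term G arG}
    (h : Rewrites R u v) (τ : ℕ → Term G arG) :
    Rewrites R (u.subst τ) (v.subst τ) := by
  obtain ⟨p, l, r, σ, hm, hs, hr⟩ := h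
  refine ⟨p, l, r, fun n => (σ n).subst τ, hm, ?_, ?_⟩
  · rw [← subst_subst]
    exact subst_subtermAt hs τ
  · rw [← subst_subst]
    exact subst_replaceAt hr τ

theorem rewrites_arg {R : Set (Term G arG × Term G arG)} {f : G}
    {ts : Fin (arG f) → Term G arG} {i : Fin (arG f)} {v : Term G arG}
    (h : Rewrites R (ts i) v) :
    Rewrites R (Term.app f ts) (Term.app f (Function.update ts i v)) := by
  obtain ⟨p, l, r, σ, hm, hs, hr⟩ := h
  refine ⟨i.1 :: p, l, r, σ, hm, ?_, ?_⟩
  · simp only [Term.subtermAt, i.isLt, dif_pos, Fin.eta]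
    exact hs
  · simp only [Term.replaceAt, i.isLt, dif_pos, Fin.eta, hr, Option.map_some]

theorem rewrites_update {R : Set (Term G arG × Term G arG)} {f : G}
    {ts : Fin (arG f) → Term G arG} {i : Fin (arG f)} {a b : Term G arG}
    (h : Rewrites R a b) :
    Rewrites R (Term.app f (Function.update ts i a))
      (Term.app f (Function.update ts i b)) := by
  have := rewrites_arg (f := f) (ts := Function.update ts i a) (i := i)
    (v := b) (by rwa [Function.update_self])
  rwa [Function.update_idem] at this

theorem rewritesStar_update {R : Set (Term G arG × Term G arG)} {f : G}
    (ts : Fin (arG f) → Term G arG) (i : Fin (arG f)) {a b : Term G arG}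
    (h : RewritesStar R a b) :
    RewritesStar R (Term.app f (Function.update ts i a))
      (Term.app f (Function.update ts i b)) :=
  Relation.ReflTransGen.lift (fun x => Term.app f (Function.update ts i x))
    (fun _ _ hab => rewrites_update hab) _ _ h

theorem rewritesStar_app {R : Set (Term G arG × Term G arG)} {f : G}
    {ts ts' : Fin (arG f) → Term G arG}
    (h : ∀ i, RewritesStar R (ts i) (ts' i)) :
    RewritesStar R (Term.app f ts) (Term.app f ts') := by
  classical
  have aux : ∀ s : Finset (Fin (arG f)),
      RewritesStar R (Term.app f ts) (Term.app f (fun i => if i ∈ s then ts' i else ts i)) := by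
    intro s
    induction s using Finset.induction_on with
    | empty =>
        simp only [Finset.notMem_empty, if_false]
        exact Relation.ReflTransGen.refl
    | @insert a s ha ih =>
        refine Relation.ReflTransGen.trans ih ?_
        have key : (fun i => if i ∈ insert a s then ts' i else ts i)
            = Function.update (fun i => if i ∈ s then ts' i else ts i) a (ts' a) := by
          funext j
          rcases eq_or_ne j a with rfl | hne
          · simp
          · simp [Function.update_of_ne hne, Finset.mem_insert, hne]
        rw [key]
        have : Term.app f (fun i => if i ∈ s then ts' i else ts i)
            = Term.app f (Function.update (fun i => if i ∈ s then ts' i else ts i) a (ts a)) := by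
          congr 1
          funext j
          rcases eq_or_ne j a with rfl | hne
          · simp [ha]
          · simp [Function.update_of_ne hne]
        rw [this]
        exact rewritesStar_update _ a (h a)
  have := aux Finset.univ
  simpa using this

/-! #### Automata lemmas -/

variable {Q : Type}

theorem reaches_mono {Γ Γ' : Set (TARule G arG Q)} (hsub : Γ ⊆ Γ')
    {t : Term G arG} {q : Q} (h : Reaches Γ t q) : Reaches Γ' t q := by
  induction h with
  | app hch hmem ih => exact Reaches.app ih (hsub hmem)

theorem reachesT_mono {Γ Γ' : Set (TARule G arG Q)} (hsub : Γ ⊆ Γ')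
    {θ : ℕ → Q} {t : Term G arG} {q : Q} (h : ReachesT Γ θ t q) : ReachesT Γ' θ t q := by
  induction h with
  | var n => exact ReachesT.var n
  | app hch hmem ih => exact ReachesT.app ih (hsub hmem)

theorem reaches_ground {Γ : Set (TARule G arG Q)} {t : Term G arG} {q : Q}
    (h : Reaches Γ t q) : t.Ground := by
  induction h with
  | app hch hmem ih => exact ground_app.mpr ih

theorem reachesT_congr {Γ : Set (TARule G arG Q)} {θ θ' : ℕ → Q} {t : Term G arG} {q : Q}
    (hv : ∀ n ∈ t.vars, θ n = θ' n) (h : ReachesT Γ θ t q) : ReachesT Γ θ' t q := by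
  induction h with
  | var n =>
      have := hv n (by simp [Term.vars])
      rw [this]
      exact ReachesT.var n
  | @app f ts qs q hch hmem ih =>
      exact ReachesT.app (fun i => ih i (fun n hn => hv n (mem_vars_app.mpr ⟨i, hn⟩))) hmem

theorem chain_mono {Γs : ℕ → Set (TARule G arG Q)} (hmono : ∀ n, Γs n ⊆ Γs (n + 1))
    {n m : ℕ} (h : n ≤ m) : Γs n ⊆ Γs m := by
  induction m with
  | zero => cases Nat.le_zero.mp h; exact subset_rfl
  | succ m ih =>
      rcases Nat.lt_or_ge n (m + 1) with hlt | hge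
      · exact (ih (Nat.lt_succ_iff.mp hlt)).trans (hmono m)
      · have : n = m + 1 := le_antisymm h hge
        subst this; exact subset_rfl

theorem reaches_iUnion {Γs : ℕ → Set (TARule G arG Q)} (hmono : ∀ n, Γs n ⊆ Γs (n + 1))
    {t : Term G arG} {q : Q} (h : Reaches (⋃ n, Γs n) t q) : ∃ n, Reaches (Γs n) t q := by
  induction h with
  | @app f ts qs q hch hmem ih =>
      obtain ⟨n0, hn0⟩ := Set.mem_iUnion.mp hmem
      choose ns hns using ih
      refine ⟨max n0 (Finset.univ.sup ns), Reaches.app (qs := qs) ?_ ?_⟩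
      · intro i
        refine reaches_mono (chain_mono hmono ?_) (hns i)
        exact le_trans (Finset.le_sup (Finset.mem_univ i)) (le_max_right _ _)
      · exact chain_mono hmono (le_max_left _ _) hn0

theorem reachesT_iUnion {Γs : ℕ → Set (TARule G arG Q)} (hmono : ∀ n, Γs n ⊆ Γs (n + 1))
    {θ : ℕ → Q} {t : Term G arG} {q : Q} (h : ReachesT (⋃ n, Γs n) θ t q) :
    ∃ n, ReachesT (Γs n) θ t q := by
  induction h with
  | var n => exact ⟨0, ReachesT.var n⟩
  | @app f ts qs q hch hmem ih =>
      obtain ⟨n0, hn0⟩ := Set.mem_iUnion.mp hmem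
      choose ns hns using ih
      refine ⟨max n0 (Finset.univ.sup ns), ReachesT.app (qs := qs) ?_ ?_⟩
      · intro i
        refine reachesT_mono (chain_mono hmono ?_) (hns i)
        exact le_trans (Finset.le_sup (Finset.mem_univ i)) (le_max_right _ _)
      · exact chain_mono hmono (le_max_left _ _) hn0

theorem reaches_replace {Γ : Set (TARule G arG Q)} :
    ∀ (p : List ℕ) (s v s' : Term G arG) (q : Q),
      s.replaceAt p v = some s' → Reaches Γ s' q →
      ∃ q0, Reaches Γ v q0 ∧
        ∀ w s'', s.replaceAt p w = some s'' → Reaches Γ w q0 → Reaches Γ s'' q := by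
  intro p
  induction p with
  | nil =>
      intro s v s' q hrep hr
      have hv : v = s' := by
        cases s <;> (simp only [Term.replaceAt, Option.some.injEq] at hrep; exact hrep)
      subst hv
      refine ⟨q, hr, ?_⟩
      intro w s'' hw hrw
      have : w = s'' := by
        cases s <;> (simp only [Term.replaceAt, Option.some.injEq] at hw; exact hw)
      subst this; exact hrw
  | cons i p ih =>
      intro s v s' q hrep hr
      cases s with
      | var n => exact absurd hrep (by simp [Term.replaceAt])
      | app f ts =>
          simp only [Term.replaceAt] at hrep
          split at hrep
          · next hlt =>
              rw [Option.map_eq_some_iff] at hrep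
              obtain ⟨c, hc, hs'⟩ := hrep
              subst hs'
              cases hr with
              | @app _ _ qs q hch hmem =>
                  have hchi : Reaches Γ c (qs ⟨i, hlt⟩) := by
                    have := hch ⟨i, hlt⟩
                    rwa [Function.update_self] at this
                  obtain ⟨q0, hq0, hprop⟩ := ih (ts ⟨i, hlt⟩) v c (qs ⟨i, hlt⟩) hc hchi
                  refine ⟨q0, hq0, ?_⟩
                  intro w s'' hw hrw
                  simp only [Term.replaceAt, dif_pos hlt, Option.map_eq_some_iff] at hw
                  obtain ⟨c', hc', hs''⟩ := hw
                  subst hs''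
                  refine Reaches.app (fun j => ?_) hmem
                  rcases eq_or_ne j ⟨i, hlt⟩ with rfl | hne
                  · rw [Function.update_self]
                    exact hprop w c' hc' hrw
                  · rw [Function.update_of_ne hne]
                    have := hch j
                    rwa [Function.update_of_ne hne] at this
          · exact absurd hrep (by simp)

theorem reaches_subst_decomp {Γ : Set (TARule G arG Q)} {t : Term G arG}
    (hl : t.Linear) {σ : ℕ → Term G arG} {q : Q}
    (h : Reaches Γ (t.subst σ) q) :
    ∃ θ, ReachesT Γ θ t q ∧ ∀ m ∈ t.vars, Reaches Γ (σ m) (θ m) := by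
  classical
  induction t generalizing q with
  | var n =>
      refine ⟨fun _ => q, ReachesT.var n, ?_⟩
      intro m hm
      simp only [Term.vars, Finset.mem_singleton] at hm
      subst hm
      exact h
  | app f ts ih =>
      have h' : Reaches Γ (Term.app f fun i => (ts i).subst σ) q := h
      cases h' with
      | @app _ _ qs q hch hmem =>
          have ihi : ∀ i, ∃ θ, ReachesT Γ θ (ts i) (qs i) ∧
              ∀ m ∈ (ts i).vars, Reaches Γ (σ m) (θ m) :=
            fun i => ih i (linear_app_child hl i) (hch i)
          choose θs h1 h2 using ihi
          refine ⟨fun m => if hm : ∃ i, m ∈ (ts i).vars then θs hm.choose m else q,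
            ReachesT.app (fun i => reachesT_congr ?_ (h1 i)) hmem, ?_⟩
          · intro m hm
            have hex : ∃ j, m ∈ (ts j).vars := ⟨i, hm⟩
            have hchoose : hex.choose = i := linear_app_unique hl hex.choose_spec hm
            rw [dif_pos hex, hchoose]
          · intro m hm
            obtain ⟨i, hi⟩ := mem_vars_app.mp hm
            have hex : ∃ j, m ∈ (ts j).vars := ⟨i, hi⟩
            have hchoose : hex.choose = i := linear_app_unique hl hex.choose_spec hi
            simp only []
            rw [dif_pos hex, hchoose]
            exact h2 i m hi

theorem combine_subst {f : G} {ss us : Fin (arG f) → Term G arG}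
    (hlin : (Term.app f ss).Linear)
    (h : ∀ i, ∃ σ, us i = (ss i).subst σ) :
    ∃ σ, (∀ i, us i = (ss i).subst σ) ∧ ∀ i m, ss i = Term.var m → σ m = us i := by
  classical
  choose σs hσs using h
  refine ⟨fun m => if hm : ∃ i, m ∈ (ss i).vars then
      (if _ : ∃ k, ss hm.choose = Term.var k then us hm.choose else σs hm.choose m)
    else Term.var 0, ?_, ?_⟩
  · intro i
    cases hsi : ss i with
    | var k =>
        have hk : k ∈ (ss i).vars := by rw [hsi]; simp [Term.vars]
        have hex : ∃ j, k ∈ (ss j).vars := ⟨i, hk⟩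
        have hchoose : hex.choose = i := linear_app_unique hlin hex.choose_spec hk
        show us i = Term.subst _ (Term.var k)
        simp only [Term.subst, dif_pos hex, hchoose]
        rw [dif_pos ⟨k, hsi⟩]
    | app g rs =>
        rw [hσs i, hsi]
        refine (subst_congr ?_).symm
        intro m hm
        have hm' : m ∈ (ss i).vars := by rw [hsi]; exact hm
        have hex : ∃ j, m ∈ (ss j).vars := ⟨i, hm'⟩
        have hchoose : hex.choose = i := linear_app_unique hlin hex.choose_spec hm'
        rw [dif_pos hex, hchoose, dif_neg]
        rw [hsi]
        rintro ⟨k, hk⟩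
        cases hk
  · intro i m hsi
    have hk : m ∈ (ss i).vars := by rw [hsi]; simp [Term.vars]
    have hex : ∃ j, m ∈ (ss j).vars := ⟨i, hk⟩
    have hchoose : hex.choose = i := linear_app_unique hlin hex.choose_spec hk
    simp only []
    rw [dif_pos hex, hchoose, dif_pos ⟨m, hsi⟩]

/-! #### The construction -/

theorem SR_finite (R : TRS G arG) : (SR R).Finite := by
  refine Set.Finite.subset (Set.Finite.biUnion R.finite
    (fun lr _ => finite_subterms lr.1)) ?_
  rintro s ⟨lr, hlr, f, ts, hl, i, hsub⟩
  refine Set.mem_biUnion hlr ?_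
  have h1 : (ts i).IsSubtermOf lr.1 := by
    rw [hl]; exact arg_isSubtermOf i
  exact isSubtermOf_trans hsub h1

theorem BStateSet_finite (R : TRS G arG) : (BStateSet R).Finite :=
  ((SR_finite R).image _).union (Set.finite_singleton _)

theorem var0_mem_BStateSet (R : TRS G arG) : (Term.var 0 : Term G arG) ∈ BStateSet R :=
  Or.inr rfl

theorem SR_arg {R : TRS G arG} {g : G} {ss : Fin (arG g) → Term G arG}
    (h : Term.app g ss ∈ SR R) (i : Fin (arG g)) : ss i ∈ SR R := by
  obtain ⟨lr, hlr, f, ts, hl, j, hsub⟩ := h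
  exact ⟨lr, hlr, f, ts, hl, j, isSubtermOf_trans (arg_isSubtermOf i) hsub⟩

theorem SR_linear {R : TRS G arG} (hL : R.LeftLinear) {s : Term G arG}
    (h : s ∈ SR R) : s.Linear := by
  obtain ⟨lr, hlr, f, ts, hl, j, hsub⟩ := h
  have h1 : (ts j).IsSubtermOf lr.1 := by
    rw [hl]; exact arg_isSubtermOf j
  obtain ⟨p, hp⟩ := isSubtermOf_trans hsub h1
  exact linear_subtermAt hp (hL lr hlr)

theorem stPattern_mem_BStateSet {R : TRS G arG} {s : Term G arG} (h : s ∈ SR R) :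
    stPattern s ∈ BStateSet R :=
  Or.inl ⟨s, h, rfl⟩

theorem mem_BStateSet_of_SR_app {R : TRS G arG} {f : G} {ts : Fin (arG f) → Term G arG}
    (h : Term.app f ts ∈ SR R) : Term.app f ts ∈ BStateSet R :=
  Or.inl ⟨Term.app f ts, h, rfl⟩

variable (R : TRS G arG) (Q : Type) in
/-- The state space of the constructed automaton. -/
def QP : Type := Q ⊕ {t : Term G arG // t ∈ BStateSet R}

open Classical in
noncomputable def encR (R : TRS G arG) (Q : Type) : Term G arG → QP R Q := fun t =>
  if h : t ∈ BStateSet R then Sum.inr ⟨t, h⟩ else Sum.inr ⟨Term.var 0, var0_mem_BStateSet R⟩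

theorem encR_ne_inl (R : TRS G arG) (Q : Type) (t : Term G arG) (q : Q) :
    encR R Q t ≠ Sum.inl q := by
  by_cases h : t ∈ BStateSet R <;> simp only [encR, h, ↓reduceDIte] <;> exact Sum.inr_ne_inl

theorem encR_inj {R : TRS G arG} {Q : Type} {t t' : Term G arG}
    (ht : t ∈ BStateSet R) (ht' : t' ∈ BStateSet R)
    (h : encR R Q t = encR R Q t') : t = t' := by
  simp only [encR, ht, ht', ↓reduceDIte] at h
  exact congrArg Subtype.val (Sum.inr_injective h)

variable (R : TRS G arG) (Q : Type) (A : TreeAutomaton G arG Q)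

/-- The `A`-transitions lifted to the combined state space. -/
def liftAR : Set (TARule G arG (QP R Q)) :=
  (fun ρ => (⟨ρ.1, Sum.inl ∘ ρ.2.1, Sum.inl ρ.2.2⟩ : TARule G arG (QP R Q))) '' A.trans

/-- The initial transitions. -/
def Gam0 : Set (TARule G arG (QP R Q)) := liftAR R Q A ∪ BTrans R (encR R Q)

/-- Ground-accessible states. -/
def QcR : Set (QP R Q) := {q | ∃ u : Term G arG, u.Ground ∧ Reaches (Gam0 R Q A) u q}

/-- The saturated transition set. -/
noncomputable def Delt : Set (TARule G arG (QP R Q)) :=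
  satGamma R (encR R Q) (QcR R Q A) (Gam0 R Q A)

variable {R Q A}

theorem satStep_chain (n : ℕ) :
    (satStep R (encR R Q) (QcR R Q A))^[n] (Gam0 R Q A)
      ⊆ (satStep R (encR R Q) (QcR R Q A))^[n + 1] (Gam0 R Q A) := by
  rw [Function.iterate_succ_apply']
  exact Set.subset_union_left

theorem iter_subset_Delt (n : ℕ) :
    (satStep R (encR R Q) (QcR R Q A))^[n] (Gam0 R Q A) ⊆ Delt R Q A :=
  Set.subset_iUnion (fun n => (satStep R (encR R Q) (QcR R Q A))^[n] (Gam0 R Q A)) n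

theorem Gam0_subset_Delt : Gam0 R Q A ⊆ Delt R Q A :=
  iter_subset_Delt 0

theorem reach_x {u : Term G arG} (hu : u.Ground) :
    Reaches (Gam0 R Q A) u (encR R Q (Term.var 0)) := by
  induction u with
  | var n => exact absurd hu (not_ground_var n)
  | app f ts ih =>
      refine Reaches.app (fun i => ih i (ground_app.mp hu i)) ?_
      exact Or.inr (Or.inr ⟨f, rfl⟩)

theorem Bcomplete {t : Term G arG} (ht : t ∈ SR R) {σ : ℕ → Term G arG}
    (hσ : ∀ m ∈ t.vars, (σ m).Ground) :
    Reaches (Gam0 R Q A) (t.subst σ) (encR R Q (stPattern t)) := by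
  induction t with
  | var n =>
      exact reach_x (hσ n (by simp [Term.vars]))
  | app f ts ih =>
      refine Reaches.app (qs := fun i => encR R Q (stPattern (ts i)))
        (fun i => ih i (SR_arg ht i) (fun m hm => hσ m (mem_vars_app.mpr ⟨i, hm⟩))) ?_
      exact Or.inr (Or.inl ⟨f, ts, ht, rfl⟩)

theorem Bsound (hL : R.LeftLinear) {u : Term G arG} {x : QP R Q}
    (h : Reaches (Gam0 R Q A) u x) :
    ∀ t ∈ BStateSet R, x = encR R Q t → ∃ σ, u = t.subst σ := by
  induction h with
  | @app f ts qs q hch hmem ih =>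
      intro t ht heq0
      rcases hmem with hA | hB | hP
      · -- lifted A-rule: impossible, target is an inl state
        obtain ⟨ρ, _, heq⟩ := hA
        have hq : Sum.inl ρ.2.2 = q :=
          congrArg (fun ρ : TARule G arG (QP R Q) => ρ.2.2) heq
        rw [heq0] at hq
        exact absurd hq.symm (encR_ne_inl R Q t ρ.2.2)
      · -- BMatch rule
        obtain ⟨g, ss, hSR, heq⟩ := hB
        have hf : f = g := congrArg Sigma.fst heq
        subst hf
        have h2 : (qs, q) = (fun i => encR R Q (stPattern (ss i)), encR R Q (Term.app f ss)) :=
          eq_of_heq (Sigma.ext_iff.mp heq).2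
        have hqs : qs = fun i => encR R Q (stPattern (ss i)) := congrArg Prod.fst h2
        have hq : q = encR R Q (Term.app f ss) := congrArg Prod.snd h2
        have htss : t = Term.app f ss := by
          refine encR_inj (Q := Q) ht (mem_BStateSet_of_SR_app hSR) ?_
          rw [← heq0, hq]
        subst htss
        have hinsts : ∀ i, ∃ σ, ts i = (ss i).subst σ := by
          intro i
          cases hsi : ss i with
          | var k => exact ⟨fun _ => ts i, rfl⟩
          | app g' rs =>
              have hmem' : stPattern (ss i) ∈ BStateSet R :=
                stPattern_mem_BStateSet (SR_arg hSR i)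
              have hqsi : qs i = encR R Q (stPattern (ss i)) := congrFun hqs i
              obtain ⟨σ, hσ⟩ := ih i (stPattern (ss i)) hmem' hqsi
              refine ⟨σ, ?_⟩
              rw [hσ, hsi]
              rfl
        obtain ⟨σ, hσ, -⟩ := combine_subst (SR_linear hL hSR) hinsts
        refine ⟨σ, ?_⟩
        show Term.app f ts = Term.app f fun i => (ss i).subst σ
        congr 1
        funext i
        exact hσ i
      · -- BProp rule
        obtain ⟨g, heq⟩ := hP
        have hf : f = g := congrArg Sigma.fst heq
        subst hf
        have h2 : (qs, q) = (fun _ => encR R Q (Term.var 0), encR R Q (Term.var 0)) :=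
          eq_of_heq (Sigma.ext_iff.mp heq).2
        have hq : q = encR R Q (Term.var 0) := congrArg Prod.snd h2
        have ht0 : t = Term.var 0 := by
          refine encR_inj (Q := Q) ht (var0_mem_BStateSet R) ?_
          rw [← heq0, hq]
        subst ht0
        exact ⟨fun _ => Term.app f ts, rfl⟩

variable (R Q A) in
/-- A transition rule is sound: it can be simulated by rewriting followed by `Γ0`. -/
def RuleSound (ρ : TARule G arG (QP R Q)) : Prop :=
  ∀ us : Fin (arG ρ.1) → Term G arG,
    (∀ i, Reaches (Gam0 R Q A) (us i) (ρ.2.1 i)) →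
    ∃ t, RewritesStar R.rules (Term.app ρ.1 us) t ∧ Reaches (Gam0 R Q A) t ρ.2.2

theorem lemG {Γ : Set (TARule G arG (QP R Q))} (hS : ∀ ρ ∈ Γ, RuleSound R Q A ρ)
    {s : Term G arG} {q : QP R Q} (h : Reaches Γ s q) :
    ∃ t, RewritesStar R.rules s t ∧ Reaches (Gam0 R Q A) t q := by
  induction h with
  | @app f ts qs q hch hmem ih =>
      choose ts' h1 h2 using ih
      obtain ⟨t', ht1, ht2⟩ := hS ⟨f, qs, q⟩ hmem ts' h2
      exact ⟨t', (rewritesStar_app h1).trans ht1, ht2⟩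

theorem lemC {Γ : Set (TARule G arG (QP R Q))} (hS : ∀ ρ ∈ Γ, RuleSound R Q A ρ)
    {θ : ℕ → QP R Q} {r : Term G arG} {q : QP R Q} (h : ReachesT Γ θ r q) :
    ∀ σ : ℕ → Term G arG, (∀ m ∈ r.vars, Reaches (Gam0 R Q A) (σ m) (θ m)) →
    ∃ t, RewritesStar R.rules (r.subst σ) t ∧ Reaches (Gam0 R Q A) t q := by
  induction h with
  | var n =>
      intro σ hσ
      exact ⟨σ n, Relation.ReflTransGen.refl, hσ n (by simp [Term.vars])⟩
  | @app f rs qs q hch hmem ih =>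
      intro σ hσ
      have ihi : ∀ i, ∃ t, RewritesStar R.rules ((rs i).subst σ) t ∧
          Reaches (Gam0 R Q A) t (qs i) :=
        fun i => ih i σ (fun m hm => hσ m (mem_vars_app.mpr ⟨i, hm⟩))
      choose ts' h1 h2 using ihi
      obtain ⟨t', ht1, ht2⟩ := hS ⟨f, qs, q⟩ hmem ts' h2
      refine ⟨t', ?_, ht2⟩
      show RewritesStar R.rules (Term.app f fun i => (rs i).subst σ) t'
      exact (rewritesStar_app h1).trans ht1

theorem soundDelta (hL : R.LeftLinear) (hgrow : R.Growing) :
    ∀ n, ∀ ρ ∈ (satStep R (encR R Q) (QcR R Q A))^[n] (Gam0 R Q A), RuleSound R Q A ρ := by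
  intro n
  induction n with
  | zero =>
      intro ρ hρ us hus
      obtain ⟨f, qs, q⟩ := ρ
      exact ⟨Term.app f us, Relation.ReflTransGen.refl, Reaches.app hus hρ⟩
  | succ n ihn =>
      rw [Function.iterate_succ_apply']
      rintro ρ (hρ | hρ)
      · exact ihn ρ hρ
      · obtain ⟨f', ls, r, θ, q', hrule, hQc, hRT, rfl⟩ := hρ
        intro us hus
        -- build per-child substitution instances
        have hSRls : ∀ i, ls i ∈ SR R := by
          intro i
          exact ⟨(Term.app f' ls, r), hrule, f', ls, rfl, i, isSubtermOf_refl _⟩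
        have hinsts : ∀ i, ∃ σ, us i = (ls i).subst σ := by
          intro i
          cases hi : ls i with
          | var m => exact ⟨fun _ => us i, rfl⟩
          | app g ss =>
              have h' : Reaches (Gam0 R Q A) (us i) (satArg (encR R Q) θ r.vars (ls i)) :=
                hus i
              rw [hi] at h'
              have h'' : Reaches (Gam0 R Q A) (us i) (encR R Q (Term.app g ss)) := h'
              have hmem' : Term.app g ss ∈ BStateSet R :=
                mem_BStateSet_of_SR_app (hi ▸ hSRls i)
              obtain ⟨σ, hσ⟩ := Bsound hL h'' (Term.app g ss) hmem' rfl
              exact ⟨σ, hσ⟩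
        have hlinl : (Term.app f' ls).Linear := hL (Term.app f' ls, r) hrule
        obtain ⟨σ, hinst, hvar⟩ := combine_subst hlinl hinsts
        classical
        set σ' : ℕ → Term G arG := fun m =>
          if m ∈ (Term.app f' ls).vars then σ m
          else if hm2 : ∃ u : Term G arG, u.Ground ∧ Reaches (Gam0 R Q A) u (θ m)
            then hm2.choose else Term.var 0 with hσ'
        have ha : Term.app f' us = (Term.app f' ls).subst σ' := by
          show Term.app f' us = Term.app f' fun i => (ls i).subst σ'
          congr 1
          funext i
          have : (ls i).subst σ' = (ls i).subst σ := by
            refine subst_congr ?_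
            intro m hm
            simp only [hσ', if_pos (mem_vars_app.mpr ⟨i, hm⟩)]
          rw [this]
          exact hinst i
        have hb : ∀ m ∈ r.vars, Reaches (Gam0 R Q A) (σ' m) (θ m) := by
          intro m hmr
          by_cases hml : m ∈ (Term.app f' ls).vars
          · obtain ⟨i, hmi⟩ := mem_vars_app.mp hml
            have hvari : ls i = Term.var m :=
              hgrow (Term.app f' ls, r) hrule m hml hmr f' ls rfl i hmi
            have hσm : σ' m = us i := by
              rw [hσ']
              simp only [if_pos hml]
              exact hvar i m hvari
            rw [hσm]
            have h' : Reaches (Gam0 R Q A) (us i) (satArg (encR R Q) θ r.vars (ls i)) :=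
              hus i
            rw [hvari] at h'
            simp only [satArg, if_pos hmr] at h'
            exact h'
          · have hQm : ∃ u : Term G arG, u.Ground ∧ Reaches (Gam0 R Q A) u (θ m) :=
              hQc m hmr
            have hσm : σ' m = hQm.choose := by
              rw [hσ']
              simp only [if_neg hml]
              rw [dif_pos hQm]
            rw [hσm]
            exact hQm.choose_spec.2
        obtain ⟨t, hstar, hreach⟩ := lemC ihn hRT σ' hb
        refine ⟨t, ?_, hreach⟩
        refine Relation.ReflTransGen.head ?_ hstar
        refine ⟨[], Term.app f' ls, r, σ', hrule, ?_, ?_⟩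
        · show some (Term.app f' us) = some ((Term.app f' ls).subst σ')
          rw [ha]
        · rfl

theorem soundness (hL : R.LeftLinear) (hgrow : R.Growing) {s : Term G arG}
    {q : QP R Q} (h : Reaches (Delt R Q A) s q) :
    ∃ t, RewritesStar R.rules s t ∧ Reaches (Gam0 R Q A) t q := by
  have h' : Reaches (⋃ n, (satStep R (encR R Q) (QcR R Q A))^[n] (Gam0 R Q A)) s q := h
  obtain ⟨n, hn⟩ := reaches_iUnion (fun n => satStep_chain n) h'
  exact lemG (soundDelta hL hgrow n) hn

theorem mem_QcR (hL : R.LeftLinear) (hgrow : R.Growing) {u : Term G arG}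
    {q : QP R Q} (h : Reaches (Delt R Q A) u q) : q ∈ QcR R Q A := by
  obtain ⟨t, _, ht⟩ := soundness hL hgrow h
  exact ⟨t, reaches_ground ht, ht⟩

theorem complete_core (hL : R.LeftLinear) (hRL : R.RightLinear) (hgrow : R.Growing)
    {l r : Term G arG} {σ : ℕ → Term G arG} {q : QP R Q}
    (hrule : (l, r) ∈ R.rules) (hlg : (l.subst σ).Ground)
    (h : Reaches (Delt R Q A) (r.subst σ) q) :
    Reaches (Delt R Q A) (l.subst σ) q := by
  cases hl : l with
  | var n => exact absurd hl (R.lhs_not_var (l, r) hrule n)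
  | app f ls =>
      subst hl
      have hlinr : r.Linear := hRL (Term.app f ls, r) hrule
      obtain ⟨θ, hRT, hθ⟩ := reaches_subst_decomp hlinr h
      have h' : ReachesT (⋃ n, (satStep R (encR R Q) (QcR R Q A))^[n] (Gam0 R Q A))
          θ r q := hRT
      obtain ⟨n1, hRTn⟩ := reachesT_iUnion (fun n => satStep_chain n) h'
      have hQcθ : ∀ m ∈ r.vars, θ m ∈ QcR R Q A :=
        fun m hm => mem_QcR hL hgrow (hθ m hm)
      have hrulemem : (⟨f, fun i => satArg (encR R Q) θ r.vars (ls i), q⟩ :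
          TARule G arG (QP R Q)) ∈ Delt R Q A := by
        refine iter_subset_Delt (n1 + 1) ?_
        rw [Function.iterate_succ_apply']
        exact Or.inr ⟨f, ls, r, θ, q, hrule, hQcθ, hRTn, rfl⟩
      show Reaches (Delt R Q A) (Term.app f fun i => (ls i).subst σ) q
      refine Reaches.app (qs := fun i => satArg (encR R Q) θ r.vars (ls i))
        (fun i => ?_) hrulemem
      cases hi : ls i with
      | var m =>
          show Reaches (Delt R Q A) (σ m) (satArg (encR R Q) θ r.vars (Term.var m))
          simp only [satArg]
          split
          · next hmr => exact hθ m hmr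
          · refine reaches_mono Gam0_subset_Delt (reach_x ?_)
            refine ground_of_ground_subst hlg m ?_
            exact mem_vars_app.mpr ⟨i, by rw [hi]; simp [Term.vars]⟩
      | app g ss =>
          show Reaches (Delt R Q A) ((Term.app g ss).subst σ)
            (satArg (encR R Q) θ r.vars (Term.app g ss))
          have hSRi : ls i ∈ SR R :=
            ⟨(Term.app f ls, r), hrule, f, ls, rfl, i, isSubtermOf_refl _⟩
          have hgr : ∀ m ∈ (ls i).vars, (σ m).Ground := by
            intro m hm
            exact ground_of_ground_subst hlg m (mem_vars_app.mpr ⟨i, hm⟩)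
          have hbc := Bcomplete (A := A) hSRi hgr
          rw [hi] at hbc
          exact reaches_mono Gam0_subset_Delt hbc

theorem complete_step (hL : R.LeftLinear) (hRL : R.RightLinear) (hgrow : R.Growing)
    {s s' : Term G arG} {q : QP R Q} (hs : s.Ground)
    (hst : Rewrites R.rules s s') (h : Reaches (Delt R Q A) s' q) :
    Reaches (Delt R Q A) s q := by
  obtain ⟨p, l, r, σ, hrule, hsub, hrep⟩ := hst
  obtain ⟨q0, hq0, hprop⟩ := reaches_replace p s (r.subst σ) s' q hrep h
  have hlg : (l.subst σ).Ground := ground_subtermAt hsub hs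
  have hcore := complete_core hL hRL hgrow hrule hlg hq0
  exact hprop (l.subst σ) s (replaceAt_self hsub) hcore

theorem complete_star (hL : R.LeftLinear) (hRL : R.RightLinear) (hgrow : R.Growing)
    {τ : ℕ → Term G arG} (hτ : ∀ n, (τ n).Ground) {s t : Term G arG} {q : QP R Q}
    (h : RewritesStar R.rules s t) (hr : Reaches (Delt R Q A) (t.subst τ) q) :
    Reaches (Delt R Q A) (s.subst τ) q := by
  induction h using Relation.ReflTransGen.head_induction_on with
  | refl => exact hr
  | head hab _ ih =>
      refine complete_step hL hRL hgrow ?_ (rewrites_subst hab τ) ih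
      exact ground_subst_of (fun n _ => hτ n)

theorem reaches_liftAR {t : Term G arG} {q : Q} (h : Reaches A.trans t q) :
    Reaches (Gam0 R Q A) t (Sum.inl q) := by
  induction h with
  | @app f ts qs q hch hmem ih =>
      exact Reaches.app (qs := Sum.inl ∘ qs) ih (Or.inl ⟨⟨f, qs, q⟩, hmem, rfl⟩)

theorem reaches_unliftAR {t : Term G arG} {x : QP R Q}
    (h : Reaches (Gam0 R Q A) t x) :
    ∀ q : Q, x = Sum.inl q → Reaches A.trans t q := by
  induction h with
  | @app f ts qs q hch hmem ih =>
      intro q0 hq0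
      rcases hmem with hA | hB | hP
      · obtain ⟨ρ, hρ, heq⟩ := hA
        obtain ⟨g, qs', q'⟩ := ρ
        have hf : g = f := congrArg Sigma.fst heq
        subst hf
        have h2 : ((Sum.inl ∘ qs' : Fin (arG g) → QP R Q), (Sum.inl q' : QP R Q))
            = (qs, q) := eq_of_heq (Sigma.ext_iff.mp heq).2
        have hqs : (Sum.inl ∘ qs' : Fin (arG g) → QP R Q) = qs := congrArg Prod.fst h2
        have hq : (Sum.inl q' : QP R Q) = q := congrArg Prod.snd h2
        rw [hq0] at hq
        have hq' : q' = q0 := Sum.inl_injective hq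
        subst hq'
        refine Reaches.app (fun i => ih i (qs' i) ?_) hρ
        rw [← hqs]
        rfl
      · obtain ⟨g, ss, hSR, heq⟩ := hB
        have hq : q = encR R Q (Term.app g ss) := by
          have := congrArg (fun ρ : TARule G arG (QP R Q) => ρ.2.2) heq
          exact this
        rw [hq0] at hq
        exact absurd hq.symm (encR_ne_inl R Q _ q0)
      · obtain ⟨g, heq⟩ := hP
        have hq : q = encR R Q (Term.var 0) := by
          have := congrArg (fun ρ : TARule G arG (QP R Q) => ρ.2.2) heq
          exact this
        rw [hq0] at hq
        exact absurd hq.symm (encR_ne_inl R Q _ q0)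

end Stmt0Aux

/-- For every linear growing TRS `ℛ` over a signature `𝓖` and every
recognizable set `T` of ground terms, the set `(→_ℛ*)[T]` of ground terms that rewrite
in `ℛ` to a term in `T` is recognizable. -/
theorem statement0 {G : Type} [Fintype G] {arG : G → ℕ} (R : TRS G arG)
    (hlin : R.IsLinear) (hgrow : R.Growing)
    (T : Set (Term G arG)) (hT : Recognizable T) :
    Recognizable { s : Term G arG | s.Ground ∧ ∃ t ∈ T, RewritesStar R.rules s t } := by
  classical
  obtain ⟨Q, instQ, A, rfl⟩ := hT
  obtain ⟨hL, hRL⟩ := hlin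
  haveI : Fintype {t : Term G arG // t ∈ BStateSet R} :=
    (Stmt0Aux.BStateSet_finite R).fintype
  haveI : Fintype (Stmt0Aux.QP R Q) := by
    unfold Stmt0Aux.QP
    infer_instance
  refine ⟨Stmt0Aux.QP R Q, inferInstance,
    ⟨Stmt0Aux.Delt R Q A, Sum.inl '' A.final⟩, ?_⟩
  ext s
  simp only [Set.mem_setOf_eq, Lang]
  constructor
  · rintro ⟨hg, t, ⟨htg, qf, hqf, hreach⟩, hstar⟩
    refine ⟨hg, Sum.inl qf, ⟨qf, hqf, rfl⟩, ?_⟩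
    have hbase : Reaches (Stmt0Aux.Delt R Q A) t (Sum.inl qf) :=
      Stmt0Aux.reaches_mono Stmt0Aux.Gam0_subset_Delt (Stmt0Aux.reaches_liftAR hreach)
    have hτ : ∀ n : ℕ, ((fun _ : ℕ => s) n).Ground := fun _ => hg
    have hbase' : Reaches (Stmt0Aux.Delt R Q A) (t.subst (fun _ => s)) (Sum.inl qf) := by
      rwa [Stmt0Aux.subst_ground htg]
    have := Stmt0Aux.complete_star hL hRL hgrow hτ hstar hbase'
    rwa [Stmt0Aux.subst_ground hg] at this
  · rintro ⟨hg, x, ⟨qf, hqf, rfl⟩, hreach⟩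
    obtain ⟨t, hstar, ht⟩ := Stmt0Aux.soundness hL hgrow hreach
    have htA : Reaches A.trans t qf := Stmt0Aux.reaches_unliftAR ht qf rfl
    exact ⟨hg, t, ⟨Stmt0Aux.reaches_ground htA, qf, hqf, htA⟩, hstar⟩
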